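/- Let N ≥ 1, σ_w, σ_n, σ_wn > 0, Δt > 0, let φ ∈ ℝ^N with φ_i > 0 for all i, and let A_w, A_n be symmetric positive-semidefinite real N×N matrices. Let s, s' ∈ ℝ^N with 0 < s_i < 1 and 0 < s'_i < 1 for all i, let p ∈ ℝ^N, and define μ_w, μ_n ∈ ℝ^N by μ_{w,i} = σ_w·ln s'_i + σ_wn·(1 − s_i) and μ_{n,i} = σ_n·ln(1 − s'_i) + σ_wn·s_i. Assume the first-order scheme relations hold: for every i, φ_i·(s'_i − s_i)/Δt = −(A_w(p + μ_w))_i and φ_i·((1 − s'_i) − (1 − s_i))/Δt = −(A_n(p + μ_n))_i. Then, with F(s) = σ_w·s·(ln s − 1) + σ_n·(1 − s)·(ln(1 − s) − 1) + σ_wn·s·(1 − s), the discrete energy E(v) = Σ_i φ_i·F(v_i) satisfies (E(s') − E(s))/Δt ≤ −(p + μ_w)ᵀ A_w (p + μ_w) − (p + μ_n)ᵀ A_n (p + μ_n) ≤ 0. -/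

import Mathlib

lemma keyF (σw σn σwn : ℝ) (hσw : 0 < σw) (hσn : 0 < σn) (hσwn : 0 < σwn)
    (a b : ℝ) (ha : a ∈ Set.Ioo (0:ℝ) 1) (hb : b ∈ Set.Ioo (0:ℝ) 1) :
    (σw * b * (Real.log b - 1) + σn * (1 - b) * (Real.log (1 - b) - 1) + σwn * b * (1 - b))
    - (σw * a * (Real.log a - 1) + σn * (1 - a) * (Real.log (1 - a) - 1) + σwn * a * (1 - a))
    ≤ (σw * Real.log b + σwn * (1 - a)) * (b - a)
      + (σn * Real.log (1 - b) + σwn * a) * ((1 - b) - (1 - a)) := by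
  obtain ⟨ha0, ha1⟩ := ha
  obtain ⟨hb0, hb1⟩ := hb
  have h1 : Real.log b - Real.log a ≤ b / a - 1 := by
    rw [← Real.log_div (ne_of_gt hb0) (ne_of_gt ha0)]
    exact Real.log_le_sub_one_of_pos (by positivity)
  have h2 : Real.log (1 - b) - Real.log (1 - a) ≤ (1 - b) / (1 - a) - 1 := by
    rw [← Real.log_div (by linarith) (by linarith)]
    exact Real.log_le_sub_one_of_pos (div_pos (by linarith) (by linarith))
  have h1' : a * (Real.log b - Real.log a) ≤ b - a :=
    calc a * (Real.log b - Real.log a) ≤ a * (b / a - 1) :=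
          mul_le_mul_of_nonneg_left h1 ha0.le
      _ = b - a := by field_simp
  have h2' : (1 - a) * (Real.log (1 - b) - Real.log (1 - a)) ≤ (1 - b) - (1 - a) := by
    have h1a : (0:ℝ) < 1 - a := by linarith
    calc (1 - a) * (Real.log (1 - b) - Real.log (1 - a)) ≤ (1 - a) * ((1 - b) / (1 - a) - 1) :=
          mul_le_mul_of_nonneg_left h2 h1a.le
      _ = (1 - b) - (1 - a) := by field_simp
  nlinarith [sq_nonneg (b - a), mul_le_mul_of_nonneg_left h1' (le_of_lt hσw),
    mul_le_mul_of_nonneg_left h2' (le_of_lt hσn)]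

/-- Original energy dissipation law for the first-order convex-splitting scheme
(abstract finite-dimensional formulation). -/
theorem stmt13 (N : ℕ) (hN : 1 ≤ N) (σw σn σwn Δt : ℝ)
    (hσw : 0 < σw) (hσn : 0 < σn) (hσwn : 0 < σwn) (hΔt : 0 < Δt)
    (φ : Fin N → ℝ) (hφ : ∀ i, 0 < φ i)
    (Aw An : Matrix (Fin N) (Fin N) ℝ) (hAw : Aw.PosSemidef) (hAn : An.PosSemidef)
    (s s' p : Fin N → ℝ)
    (hs : ∀ i, s i ∈ Set.Ioo (0 : ℝ) 1) (hs' : ∀ i, s' i ∈ Set.Ioo (0 : ℝ) 1)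
    (μw μn : Fin N → ℝ)
    (hμw : ∀ i, μw i = σw * Real.log (s' i) + σwn * (1 - s i))
    (hμn : ∀ i, μn i = σn * Real.log (1 - s' i) + σwn * s i)
    (hschemew : ∀ i, φ i * (s' i - s i) / Δt = -(Aw.mulVec (p + μw)) i)
    (hschemen : ∀ i, φ i * ((1 - s' i) - (1 - s i)) / Δt = -(An.mulVec (p + μn)) i) :
    let F : ℝ → ℝ := fun x => σw * x * (Real.log x - 1) +
      σn * (1 - x) * (Real.log (1 - x) - 1) + σwn * x * (1 - x)
    let E : (Fin N → ℝ) → ℝ := fun v => ∑ i, φ i * F (v i)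
    (E s' - E s) / Δt ≤
        -dotProduct (p + μw) (Aw.mulVec (p + μw))
          - dotProduct (p + μn) (An.mulVec (p + μn)) ∧
      -dotProduct (p + μw) (Aw.mulVec (p + μw))
          - dotProduct (p + μn) (An.mulVec (p + μn)) ≤ 0 := by
  intro F E
  have key : ∀ i, F (s' i) - F (s i) ≤
      μw i * (s' i - s i) + μn i * ((1 - s' i) - (1 - s i)) := by
    intro i
    rw [hμw, hμn]
    exact keyF σw σn σwn hσw hσn hσwn (s i) (s' i) (hs i) (hs' i)
  have hzero : ∀ i, (Aw.mulVec (p + μw)) i + (An.mulVec (p + μn)) i = 0 := by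
    intro i
    have h1 := hschemew i
    have h2 := hschemen i
    have h3 : φ i * (s' i - s i) / Δt + φ i * ((1 - s' i) - (1 - s i)) / Δt = 0 := by ring
    linarith
  have step : ∀ i ∈ Finset.univ, φ i * (F (s' i) - F (s i)) / Δt ≤
      μw i * (-(Aw.mulVec (p + μw)) i) + μn i * (-(An.mulVec (p + μn)) i) := by
    intro i _
    rw [← hschemew i, ← hschemen i]
    have h2 : (φ i / Δt) * (F (s' i) - F (s i)) ≤
        (φ i / Δt) * (μw i * (s' i - s i) + μn i * ((1 - s' i) - (1 - s i))) :=
      mul_le_mul_of_nonneg_left (key i) (div_pos (hφ i) hΔt).le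
    calc φ i * (F (s' i) - F (s i)) / Δt
        = (φ i / Δt) * (F (s' i) - F (s i)) := by ring
      _ ≤ (φ i / Δt) * (μw i * (s' i - s i) + μn i * ((1 - s' i) - (1 - s i))) := h2
      _ = μw i * (φ i * (s' i - s i) / Δt) + μn i * (φ i * ((1 - s' i) - (1 - s i)) / Δt) := by
          ring
  have hE : (E s' - E s) / Δt = ∑ i, φ i * (F (s' i) - F (s i)) / Δt := by
    simp only [E]
    rw [← Finset.sum_sub_distrib, Finset.sum_div]
    congr 1
    ext i
    ring
  have hsum : ∑ i, (μw i * (-(Aw.mulVec (p + μw)) i) + μn i * (-(An.mulVec (p + μn)) i)) =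
      -dotProduct (p + μw) (Aw.mulVec (p + μw))
        - dotProduct (p + μn) (An.mulVec (p + μn)) := by
    simp only [dotProduct, Pi.add_apply, ← Finset.sum_neg_distrib,
      ← Finset.sum_sub_distrib]
    refine Finset.sum_congr rfl fun i _ => ?_
    linear_combination p i * hzero i
  constructor
  · rw [hE, ← hsum]
    exact Finset.sum_le_sum step
  · have hw := hAw.dotProduct_mulVec_nonneg (p + μw)
    have hn := hAn.dotProduct_mulVec_nonneg (p + μn)
    simp only [star_trivial] at hw hn
    linarith
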